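/- arXiv:1709.08279 — 3 statements merged into one kernel-verified Lean document; each statement's English description precedes it below -/
import Mathlib

section
/- Let 0 < p, q ≤ ∞ and define p̃, q̃ by 1/p̃ = 1 + 1/p and 1/q̃ = 1 + 1/q. Then for f ∈ L^{1,1}(ℝⁿ) and g in the Lorentz space L^{p,q}(ℝⁿ), the product fg belongs to L^{p̃,q̃}(ℝⁿ) and ‖fg‖_{L^{p̃,q̃}} ≲ ‖f‖_{L^{1,1}} ‖g‖_{L^{p,q}}, with implicit constant independent of f and g. -/
open MeasureTheory
open scoped ENNReal NNReal

/-- The decreasing rearrangement of `f`. -/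
noncomputable def rearr {n : ℕ} (f : EuclideanSpace ℝ (Fin n) → ℝ) (t : ℝ) : ℝ≥0∞ :=
  sInf {s : ℝ≥0∞ | volume {x | s < ENNReal.ofReal |f x|} ≤ ENNReal.ofReal t}

/-- The Lorentz quasi-norm `‖f‖_{L^{p,q}} = ‖ t^{1/p} f*(t) ‖_{L^q((0,∞), dt/t)}`. -/
noncomputable def lorentzNorm {n : ℕ} (f : EuclideanSpace ℝ (Fin n) → ℝ) (p q : ℝ≥0∞) : ℝ≥0∞ :=
  if q = ∞ then ⨆ t ∈ Set.Ioi (0 : ℝ), ENNReal.ofReal t ^ p⁻¹.toReal * rearr f t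
  else (∫⁻ t in Set.Ioi (0 : ℝ),
      (ENNReal.ofReal t ^ p⁻¹.toReal * rearr f t) ^ q.toReal / ENNReal.ofReal t) ^ (1 / q.toReal)

section AuxLemmas
open Filter

lemma rearr_anti {n : ℕ} (f : EuclideanSpace ℝ (Fin n) → ℝ) : Antitone (rearr f) :=
  fun s t hst => sInf_le_sInf fun a ha =>
    le_trans ha (ENNReal.ofReal_le_ofReal hst)

lemma rearr_measurable {n : ℕ} (f : EuclideanSpace ℝ (Fin n) → ℝ) : Measurable (rearr f) :=
  (rearr_anti f).measurable

lemma rearr_spec {n : ℕ} (f : EuclideanSpace ℝ (Fin n) → ℝ) (t : ℝ) :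
    volume {x | rearr f t < ENNReal.ofReal |f x|} ≤ ENNReal.ofReal t := by
  set S := {s : ℝ≥0∞ | volume {x | s < ENNReal.ofReal |f x|} ≤ ENNReal.ofReal t} with hS
  have hne : S.Nonempty := by
    refine ⟨∞, ?_⟩
    have : {x : EuclideanSpace ℝ (Fin n) | (∞ : ℝ≥0∞) < ENNReal.ofReal |f x|} = ∅ :=
      Set.eq_empty_of_forall_notMem fun x hx => not_top_lt (a := ENNReal.ofReal |f x|) hx
    simp [hS, this]
  obtain ⟨u, hu_anti, hu_tend, hu_mem⟩ := exists_seq_tendsto_sInf hne (OrderBot.bddBelow S)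
  have hsub : {x | rearr f t < ENNReal.ofReal |f x|} ⊆
      ⋃ k, {x | u k < ENNReal.ofReal |f x|} := by
    intro x hx
    obtain ⟨k, hk⟩ := (hu_tend.eventually_lt_const hx).exists
    exact Set.mem_iUnion.2 ⟨k, hk⟩
  have hmono : Monotone fun k => {x | u k < ENNReal.ofReal |f x|} := by
    intro i j hij x hx
    exact lt_of_le_of_lt (hu_anti hij) hx
  calc volume {x | rearr f t < ENNReal.ofReal |f x|}
      ≤ volume (⋃ k, {x | u k < ENNReal.ofReal |f x|}) := measure_mono hsub
    _ = ⨆ k, volume {x | u k < ENNReal.ofReal |f x|} := hmono.measure_iUnion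
    _ ≤ ENNReal.ofReal t := iSup_le fun k => hu_mem k

lemma rearr_mul {n : ℕ} (f g : EuclideanSpace ℝ (Fin n) → ℝ) {t s : ℝ}
    (ht : 0 ≤ t) (hs : 0 ≤ s) :
    rearr (fun x => f x * g x) (t + s) ≤ rearr f t * rearr g s := by
  apply sInf_le
  show volume {x | rearr f t * rearr g s < ENNReal.ofReal |f x * g x|} ≤ ENNReal.ofReal (t + s)
  have hsub : {x | rearr f t * rearr g s < ENNReal.ofReal |f x * g x|} ⊆
      {x | rearr f t < ENNReal.ofReal |f x|} ∪ {x | rearr g s < ENNReal.ofReal |g x|} := by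
    intro x hx
    rw [Set.mem_union]
    by_contra h
    push_neg at h
    obtain ⟨h1, h2⟩ := h
    rw [Set.mem_setOf_eq, not_lt] at h1 h2
    have : ENNReal.ofReal |f x * g x| ≤ rearr f t * rearr g s := by
      rw [abs_mul, ENNReal.ofReal_mul (abs_nonneg _)]
      exact mul_le_mul' h1 h2
    exact absurd hx (not_lt.2 this)
  calc volume {x | rearr f t * rearr g s < ENNReal.ofReal |f x * g x|}
      ≤ volume ({x | rearr f t < ENNReal.ofReal |f x|} ∪
          {x | rearr g s < ENNReal.ofReal |g x|}) := measure_mono hsub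
    _ ≤ volume {x | rearr f t < ENNReal.ofReal |f x|} +
          volume {x | rearr g s < ENNReal.ofReal |g x|} := measure_union_le _ _
    _ ≤ ENNReal.ofReal t + ENNReal.ofReal s := add_le_add (rearr_spec f t) (rearr_spec g s)
    _ = ENNReal.ofReal (t + s) := (ENNReal.ofReal_add ht hs).symm

lemma lint_half (H : ℝ → ℝ≥0∞) (hH : Measurable H) :
    ∫⁻ t in Set.Ioi (0 : ℝ), H (t / 2) = 2 * ∫⁻ u in Set.Ioi (0 : ℝ), H u := by
  set G := (Set.Ioi (0 : ℝ)).indicator H with hG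
  have hGm : Measurable G := hH.indicator measurableSet_Ioi
  have h1 : ∫⁻ t in Set.Ioi (0 : ℝ), H (t / 2) = ∫⁻ t, G (2⁻¹ * t) := by
    rw [← lintegral_indicator measurableSet_Ioi]
    congr 1
    funext t
    by_cases ht : t ∈ Set.Ioi (0 : ℝ)
    · have ht2 : 2⁻¹ * t ∈ Set.Ioi (0 : ℝ) := by
        simp only [Set.mem_Ioi] at ht ⊢; positivity
      rw [Set.indicator_of_mem ht, hG, Set.indicator_of_mem ht2]
      norm_num [div_eq_inv_mul]
    · have ht2 : 2⁻¹ * t ∉ Set.Ioi (0 : ℝ) := by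
        simp only [Set.mem_Ioi, not_lt] at ht ⊢
        nlinarith
      rw [Set.indicator_of_notMem ht, hG, Set.indicator_of_notMem ht2]
  have h2 : ∫⁻ t, G (2⁻¹ * t) = 2 * ∫⁻ u, G u := by
    calc ∫⁻ t, G (2⁻¹ * t) ∂volume
        = ∫⁻ x, G x ∂(Measure.map (fun t : ℝ => 2⁻¹ * t) volume) :=
          (lintegral_map hGm (measurable_id.const_mul _)).symm
      _ = ∫⁻ x, G x ∂(ENNReal.ofReal |((2 : ℝ)⁻¹)⁻¹| • volume) := by
          rw [Real.map_volume_mul_left (by norm_num : ((2:ℝ)⁻¹) ≠ 0)]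
      _ = 2 * ∫⁻ u, G u := by
          rw [lintegral_smul_measure]
          norm_num
  rw [h1, h2, lintegral_indicator measurableSet_Ioi]
end AuxLemmas

/-- Let `0 < p, q ≤ ∞` and `1/p̃ = 1 + 1/p`, `1/q̃ = 1 + 1/q`.  For `f ∈ L^{1,1}(ℝⁿ)` and
`g ∈ L^{p,q}(ℝⁿ)`, the product `fg` belongs to `L^{p̃,q̃}(ℝⁿ)` with
`‖fg‖_{L^{p̃,q̃}} ≲ ‖f‖_{L^{1,1}} ‖g‖_{L^{p,q}}`, constant independent of `f` and `g`. -/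
theorem stmt_1 {n : ℕ} (p q pt qt : ℝ≥0∞) (hp : 0 < p) (hq : 0 < q)
    (hpt : pt⁻¹ = 1 + p⁻¹) (hqt : qt⁻¹ = 1 + q⁻¹) :
    ∃ C : ℝ≥0∞, 0 < C ∧ C < ∞ ∧
      ∀ f g : EuclideanSpace ℝ (Fin n) → ℝ, Measurable f → Measurable g →
        lorentzNorm f 1 1 ≠ ∞ → lorentzNorm g p q ≠ ∞ →
        lorentzNorm (fun x => f x * g x) pt qt ≠ ∞ ∧
        lorentzNorm (fun x => f x * g x) pt qt ≤ C * lorentzNorm f 1 1 * lorentzNorm g p q := by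
  have hpinv : p⁻¹ ≠ ∞ := ENNReal.inv_ne_top.2 hp.ne'
  have hqinv : q⁻¹ ≠ ∞ := ENNReal.inv_ne_top.2 hq.ne'
  have hqt_top : qt ≠ ∞ := by
    intro h
    rw [h, ENNReal.inv_top] at hqt
    exact absurd hqt.symm (by simp)
  have hqt0 : qt ≠ 0 := by
    intro h
    rw [h, ENNReal.inv_zero] at hqt
    exact ENNReal.add_ne_top.2 ⟨ENNReal.one_ne_top, hqinv⟩ hqt.symm
  set β := p⁻¹.toReal with hβdef
  have hβ0 : 0 ≤ β := ENNReal.toReal_nonneg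
  set α := pt⁻¹.toReal with hαdef
  have hα : α = 1 + β := by
    rw [hαdef, hpt, ENNReal.toReal_add ENNReal.one_ne_top hpinv, ENNReal.toReal_one]
  have hα0 : 0 < α := by rw [hα]; linarith
  set r := qt.toReal with hrdef
  have hr0 : 0 < r := ENNReal.toReal_pos hqt0 hqt_top
  have hr_eq : r⁻¹ = 1 + q⁻¹.toReal := by
    rw [hrdef, ← ENNReal.toReal_inv, hqt,
      ENNReal.toReal_add ENNReal.one_ne_top hqinv, ENNReal.toReal_one]
  set C : ℝ≥0∞ := (2 * (2 : ℝ≥0∞) ^ (α * r)) ^ (1 / r) with hCdef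
  have hbase0 : (0 : ℝ≥0∞) < 2 * (2 : ℝ≥0∞) ^ (α * r) :=
    ENNReal.mul_pos (by norm_num) (ENNReal.rpow_pos (by norm_num) (by norm_num)).ne'
  have hαr0 : 0 ≤ α * r := le_of_lt (mul_pos hα0 hr0)
  have hbase_top : 2 * (2 : ℝ≥0∞) ^ (α * r) ≠ ∞ :=
    ENNReal.mul_ne_top (by norm_num) (ENNReal.rpow_ne_top_of_nonneg hαr0 (by norm_num))
  have hCpos : 0 < C := ENNReal.rpow_pos hbase0 hbase_top
  have hCtop : C ≠ ∞ := ENNReal.rpow_ne_top_of_nonneg (by positivity) hbase_top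
  refine ⟨C, hCpos, hCtop.lt_top, ?_⟩
  intro f g hf hg hNf_top hNg_top
  set Nf := lorentzNorm f 1 1 with hNfdef
  set Ng := lorentzNorm g p q with hNgdef
  have mF : Measurable (rearr f) := rearr_measurable f
  have mG : Measurable (rearr g) := rearr_measurable g
  have hNf_eq : Nf = ∫⁻ t in Set.Ioi (0 : ℝ), rearr f t := by
    rw [hNfdef, lorentzNorm, if_neg (by norm_num : (1 : ℝ≥0∞) ≠ ∞)]
    simp only [inv_one, ENNReal.toReal_one, ENNReal.rpow_one]
    rw [show (1 : ℝ) / 1 = 1 by norm_num, ENNReal.rpow_one]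
    refine setLIntegral_congr_fun measurableSet_Ioi (fun t ht => ?_)
    rw [mul_comm, mul_div_assoc,
      ENNReal.div_self (by simpa using ht) ENNReal.ofReal_ne_top, mul_one]
  set B : ℝ → ℝ≥0∞ := fun u => ENNReal.ofReal u ^ β * rearr g u with hBdef
  set K : ℝ≥0∞ := ∫⁻ u in Set.Ioi (0 : ℝ),
      (rearr f u) ^ r * ((B u) ^ r / ENNReal.ofReal u ^ (1 - r)) with hKdef
  have hK : K ≤ Nf ^ r * Ng ^ r := by
    have mo : Measurable fun t : ℝ => ENNReal.ofReal t := ENNReal.measurable_ofReal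
    by_cases hqfin : q = ∞
    · have hr1 : r = 1 := by
        have h1 : r⁻¹ = 1 := by rw [hr_eq, hqfin]; simp
        exact inv_eq_one.mp h1
      have hNg_sup : ∀ u : ℝ, u ∈ Set.Ioi (0 : ℝ) → B u ≤ Ng := by
        intro u hu
        rw [hNgdef, lorentzNorm, if_pos hqfin, hBdef]
        simp only [hβdef]
        exact le_biSup (fun t => ENNReal.ofReal t ^ p⁻¹.toReal * rearr g t) hu
      calc K = ∫⁻ u in Set.Ioi (0 : ℝ), rearr f u * B u := by
            rw [hKdef]
            simp [hr1]
        _ ≤ ∫⁻ u in Set.Ioi (0 : ℝ), rearr f u * Ng :=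
            setLIntegral_mono' measurableSet_Ioi fun u hu =>
              mul_le_mul_right (hNg_sup u hu) _
        _ = Nf * Ng := by rw [lintegral_mul_const' Ng _ hNg_top, ← hNf_eq]
        _ = Nf ^ r * Ng ^ r := by rw [hr1, ENNReal.rpow_one, ENNReal.rpow_one]
    · set q' := q.toReal with hq'def
      have hq'0 : 0 < q' := ENNReal.toReal_pos hq.ne' hqfin
      have hr_eq' : r⁻¹ = 1 + q'⁻¹ := by rw [hr_eq, ENNReal.toReal_inv]
      have hrval : r = q' / (q' + 1) := by
        have h1 : r⁻¹ = (q' + 1) / q' := by rw [hr_eq']; field_simp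
        rw [← inv_inv r, h1, inv_div]
      have hrq1 : r * (q' + 1) = q' := by rw [hrval]; field_simp
      have hrq2 : (1 - r) * (q' + 1) = 1 := by rw [hrval]; field_simp; ring
      have hconj : Real.HolderConjugate (1 / r) (q' + 1) := by
        rw [Real.holderConjugate_iff]
        constructor
        · rw [one_div, hr_eq']
          have : 0 < q'⁻¹ := by positivity
          linarith
        · rw [one_div, inv_inv, hrval]
          field_simp
      have hNg_pow : (∫⁻ t in Set.Ioi (0 : ℝ), (B t) ^ q' / ENNReal.ofReal t) = Ng ^ q' := by
        rw [hNgdef, lorentzNorm, if_neg hqfin, ← ENNReal.rpow_mul, one_div,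
          inv_mul_cancel₀ hq'0.ne', ENNReal.rpow_one, hBdef]
      have hld := ENNReal.lintegral_mul_le_Lp_mul_Lq (volume.restrict (Set.Ioi (0 : ℝ))) hconj
        ((mF.pow_const r).aemeasurable)
        (((((mo.pow_const β).mul mG).pow_const r).div (mo.pow_const (1 - r))).aemeasurable)
      have e1 : ∀ a : ℝ, ((rearr f a ^ r) ^ (1 / r) : ℝ≥0∞) = rearr f a := fun a => by
        rw [← ENNReal.rpow_mul, mul_one_div_cancel hr0.ne', ENNReal.rpow_one]
      have h1 : (∫⁻ a in Set.Ioi (0 : ℝ), (rearr f a ^ r) ^ (1 / r)) = Nf := by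
        rw [hNf_eq]; exact lintegral_congr e1
      have e2 : ∀ a : ℝ, (((ENNReal.ofReal a ^ β * rearr g a) ^ r /
            ENNReal.ofReal a ^ (1 - r)) ^ (q' + 1) : ℝ≥0∞)
          = (ENNReal.ofReal a ^ β * rearr g a) ^ q' / ENNReal.ofReal a := fun a => by
        rw [ENNReal.div_rpow_of_nonneg _ _ (by positivity), ← ENNReal.rpow_mul,
          ← ENNReal.rpow_mul, hrq1, hrq2, ENNReal.rpow_one]
      have h2 : (∫⁻ a in Set.Ioi (0 : ℝ), ((ENNReal.ofReal a ^ β * rearr g a) ^ r /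
            ENNReal.ofReal a ^ (1 - r)) ^ (q' + 1)) = Ng ^ q' := by
        rw [← hNg_pow]; exact lintegral_congr e2
      simp only [Pi.mul_apply, Pi.div_apply] at hld
      rw [h1, h2, one_div_one_div] at hld
      have h3 : (Ng ^ q') ^ (1 / (q' + 1)) = Ng ^ r := by
        rw [← ENNReal.rpow_mul, mul_one_div, ← hrval]
      rw [h3] at hld
      exact hld
  set R := rearr (fun x => f x * g x) with hRdef
  have hHH : Measurable fun u : ℝ =>
      (ENNReal.ofReal (2 * u) ^ α * (rearr f u * rearr g u)) ^ r / ENNReal.ofReal (2 * u) := by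
    have m2 : Measurable fun u : ℝ => ENNReal.ofReal (2 * u) :=
      ENNReal.measurable_ofReal.comp (measurable_id.const_mul 2)
    exact (((m2.pow_const α).mul (mF.mul mG)).pow_const r).div m2
  have step1 : (∫⁻ t in Set.Ioi (0 : ℝ), (ENNReal.ofReal t ^ α * R t) ^ r / ENNReal.ofReal t)
      ≤ ∫⁻ t in Set.Ioi (0 : ℝ),
        (ENNReal.ofReal t ^ α * (rearr f (t / 2) * rearr g (t / 2))) ^ r / ENNReal.ofReal t := by
    refine setLIntegral_mono' measurableSet_Ioi fun t ht => ?_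
    have ht0 : (0 : ℝ) < t := ht
    have h2 : R t ≤ rearr f (t / 2) * rearr g (t / 2) := by
      have := rearr_mul f g (le_of_lt (half_pos ht0)) (le_of_lt (half_pos ht0))
      rwa [add_halves] at this
    exact ENNReal.div_le_div (ENNReal.rpow_le_rpow (mul_le_mul_right h2 _) hr0.le) le_rfl
  have step2 : (∫⁻ t in Set.Ioi (0 : ℝ),
        (ENNReal.ofReal t ^ α * (rearr f (t / 2) * rearr g (t / 2))) ^ r / ENNReal.ofReal t)
      = ∫⁻ t in Set.Ioi (0 : ℝ), (fun u : ℝ =>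
          (ENNReal.ofReal (2 * u) ^ α * (rearr f u * rearr g u)) ^ r / ENNReal.ofReal (2 * u)) (t / 2) := by
    refine lintegral_congr fun t => ?_
    simp only
    rw [show (2 : ℝ) * (t / 2) = t by ring]
  have step3 := lint_half _ hHH
  have step4 : (∫⁻ u in Set.Ioi (0 : ℝ),
        (ENNReal.ofReal (2 * u) ^ α * (rearr f u * rearr g u)) ^ r / ENNReal.ofReal (2 * u))
      ≤ (2 : ℝ≥0∞) ^ (α * r) * K := by
    rw [hKdef, ← lintegral_const_mul' _ _ (ENNReal.rpow_ne_top_of_nonneg hαr0 (by norm_num))]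
    refine setLIntegral_mono' measurableSet_Ioi fun u hu => ?_
    have hu0 : (0 : ℝ) < u := hu
    have hx0 : ENNReal.ofReal u ≠ 0 := by simp [ENNReal.ofReal_eq_zero, not_le, hu0]
    have hxt : ENNReal.ofReal u ≠ ⊤ := ENNReal.ofReal_ne_top
    have h2x : ENNReal.ofReal (2 * u) = 2 * ENNReal.ofReal u := by
      rw [ENNReal.ofReal_mul (by norm_num : (0 : ℝ) ≤ 2), ENNReal.ofReal_ofNat]
    rw [h2x, hBdef]
    set x := ENNReal.ofReal u with hxdef
    calc ((2 * x) ^ α * (rearr f u * rearr g u)) ^ r / (2 * x)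
        ≤ ((2 * x) ^ α * (rearr f u * rearr g u)) ^ r / x :=
          ENNReal.div_le_div_left (le_mul_of_one_le_left' one_le_two) _
      _ = 2 ^ (α * r) * (rearr f u ^ r * ((x ^ β * rearr g u) ^ r / x ^ (1 - r))) := by
          have hxα : x ^ α = x * x ^ β := by
            rw [hα, ENNReal.rpow_add 1 β hx0 hxt, ENNReal.rpow_one]
          have key : x ^ r * x⁻¹ = (x ^ (1 - r))⁻¹ := by
            rw [← ENNReal.rpow_neg_one x, ← ENNReal.rpow_add r (-1) hx0 hxt,
              ← ENNReal.rpow_neg]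
            congr 1
            ring
          rw [ENNReal.mul_rpow_of_nonneg 2 x hα0.le, hxα]
          simp only [div_eq_mul_inv, ENNReal.mul_rpow_of_nonneg _ _ hr0.le,
            ← ENNReal.rpow_mul]
          rw [← key]
          ring
  have hIbound : (∫⁻ t in Set.Ioi (0 : ℝ), (ENNReal.ofReal t ^ α * R t) ^ r / ENNReal.ofReal t)
      ≤ 2 * ((2 : ℝ≥0∞) ^ (α * r) * (Nf ^ r * Ng ^ r)) :=
    step1.trans (step2.le.trans (step3.le.trans
      (mul_le_mul_right (step4.trans (mul_le_mul_right hK _)) 2)))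
  have hmain : lorentzNorm (fun x => f x * g x) pt qt ≤ C * Nf * Ng := by
    rw [lorentzNorm, if_neg hqt_top, ← hαdef, ← hrdef, ← hRdef]
    refine le_trans (ENNReal.rpow_le_rpow hIbound (by positivity)) (le_of_eq ?_)
    rw [← mul_assoc,
      ENNReal.mul_rpow_of_nonneg (2 * 2 ^ (α * r)) (Nf ^ r * Ng ^ r) (by positivity),
      ENNReal.mul_rpow_of_nonneg (Nf ^ r) (Ng ^ r) (by positivity),
      ← ENNReal.rpow_mul Nf, ← ENNReal.rpow_mul Ng, mul_one_div_cancel hr0.ne',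
      ENNReal.rpow_one, ENNReal.rpow_one, ← hCdef, mul_assoc]
  refine ⟨?_, hmain⟩
  exact ne_top_of_le_ne_top
    (ENNReal.mul_ne_top (ENNReal.mul_ne_top hCtop hNf_top) hNg_top) hmain
end

section
/- Let Ω : ℝⁿ \ {0} → ℝ be homogeneous of degree zero and Lipschitz on the unit sphere S^{n-1}. Then for Q₀ = [-1/2,1/2]ⁿ, the quantity sup_{x ∈ Q₀} ∫_{Q₀} |Ω(x - y + h) - Ω(x + h)| dy tends to 0 as |h| → ∞. -/
open MeasureTheory
open scoped ENNReal NNReal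

/-- The unit cube `Q₀ = [-1/2, 1/2]ⁿ`. -/
def unitCube (n : ℕ) : Set (EuclideanSpace ℝ (Fin n)) :=
  {x | ∀ i, |x i| ≤ 1 / 2}

lemma aux_normalize {E : Type*} [NormedAddCommGroup E] [NormedSpace ℝ E]
    (a b : E) (ha : a ≠ 0) (hb : b ≠ 0) :
    ‖‖a‖⁻¹ • a - ‖b‖⁻¹ • b‖ ≤ 2 * ‖a - b‖ / ‖a‖ := by
  have ha' : (0:ℝ) < ‖a‖ := norm_pos_iff.mpr ha
  have hb' : (0:ℝ) < ‖b‖ := norm_pos_iff.mpr hb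
  have key : ‖a‖⁻¹ • a - ‖b‖⁻¹ • b = ‖a‖⁻¹ • (a - b) + (‖a‖⁻¹ - ‖b‖⁻¹) • b := by
    rw [smul_sub, sub_smul]; abel
  have hnn : |‖b‖ - ‖a‖| ≤ ‖a - b‖ := by
    rw [← norm_neg (a - b)]; simpa using abs_norm_sub_norm_le b a
  have h2 : |‖a‖⁻¹ - ‖b‖⁻¹| * ‖b‖ ≤ ‖a - b‖ / ‖a‖ := by
    have e : ‖a‖⁻¹ - ‖b‖⁻¹ = (‖b‖ - ‖a‖) / (‖a‖ * ‖b‖) := by field_simp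
    rw [e, abs_div, abs_of_pos (mul_pos ha' hb')]
    rw [div_mul_eq_mul_div, div_le_div_iff₀ (by positivity) ha']
    calc |‖b‖ - ‖a‖| * ‖b‖ * ‖a‖ ≤ ‖a - b‖ * ‖b‖ * ‖a‖ := by
          gcongr
      _ = ‖a - b‖ * (‖a‖ * ‖b‖) := by ring
  calc ‖‖a‖⁻¹ • a - ‖b‖⁻¹ • b‖ ≤ ‖‖a‖⁻¹ • (a - b)‖ + ‖(‖a‖⁻¹ - ‖b‖⁻¹) • b‖ := by
        rw [key]; exact norm_add_le _ _
    _ = ‖a - b‖ / ‖a‖ + |‖a‖⁻¹ - ‖b‖⁻¹| * ‖b‖ := by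
        rw [norm_smul, norm_smul, Real.norm_eq_abs, Real.norm_eq_abs,
          abs_of_pos (inv_pos.mpr ha'), inv_mul_eq_div]
    _ ≤ ‖a - b‖ / ‖a‖ + ‖a - b‖ / ‖a‖ := by linarith
    _ = 2 * ‖a - b‖ / ‖a‖ := by ring

lemma aux_volume (n : ℕ) : volume (unitCube n) = 1 := by
  have h1 : unitCube n
      = (MeasurableEquiv.toLp 2 (Fin n → ℝ)).symm ⁻¹'
        (Set.univ.pi fun _ => Set.Icc (-(1/2):ℝ) (1/2)) := by
    ext x
    simp only [unitCube, Set.mem_setOf_eq, Set.mem_preimage, Set.mem_pi, Set.mem_univ,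
      forall_true_left, Set.mem_Icc, abs_le]
    rfl
  rw [h1, (EuclideanSpace.volume_preserving_symm_measurableEquiv_toLp (Fin n)).measure_preimage
      (by measurability)]
  rw [volume_pi_pi]
  simp [Real.volume_Icc]
  norm_num

lemma aux_norm_le {n : ℕ} {x : EuclideanSpace ℝ (Fin n)} (hx : x ∈ unitCube n) :
    ‖x‖ ≤ Real.sqrt n / 2 := by
  rw [EuclideanSpace.norm_eq]
  have h1 : ∑ i, ‖x i‖ ^ 2 ≤ (n : ℝ) / 4 := by
    calc ∑ i, ‖x i‖ ^ 2 ≤ ∑ _i : Fin n, ((1:ℝ)/2) ^ 2 := by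
          refine Finset.sum_le_sum fun i _ => ?_
          have := hx i
          rw [Real.norm_eq_abs]
          nlinarith [abs_nonneg (x i)]
      _ = (n : ℝ) / 4 := by simp [Finset.card_univ]; ring
  calc Real.sqrt (∑ i, ‖x i‖ ^ 2) ≤ Real.sqrt ((n:ℝ)/4) := Real.sqrt_le_sqrt h1
    _ = Real.sqrt n / 2 := by
        have h4 : Real.sqrt 4 = 2 := by
          rw [show (4:ℝ) = 2 ^ 2 by norm_num, Real.sqrt_sq (by norm_num)]
        rw [Real.sqrt_div (Nat.cast_nonneg n), h4]

/-- Let `Ω : ℝⁿ \ {0} → ℝ` be homogeneous of degree zero and Lipschitz on the unit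
sphere.  Then `sup_{x ∈ Q₀} ∫_{Q₀} |Ω(x - y + h) - Ω(x + h)| dy → 0` as `|h| → ∞`. -/
theorem stmt_9 {n : ℕ} (Ω : EuclideanSpace ℝ (Fin n) → ℝ) (L : ℝ)
    (hhom : ∀ t : ℝ, 0 < t → ∀ x : EuclideanSpace ℝ (Fin n), x ≠ 0 → Ω (t • x) = Ω x)
    (hlip : ∀ x z : EuclideanSpace ℝ (Fin n), ‖x‖ = 1 → ‖z‖ = 1 → |Ω x - Ω z| ≤ L * ‖x - z‖) :
    ∀ ε : ℝ, 0 < ε → ∃ M : ℝ, ∀ h : EuclideanSpace ℝ (Fin n), M ≤ ‖h‖ →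
      (⨆ x ∈ unitCube n, ∫⁻ y in unitCube n,
          ENNReal.ofReal |Ω (x - y + h) - Ω (x + h)|) ≤ ENNReal.ofReal ε := by
  intro ε hε
  set s := Real.sqrt n with hs
  have hs0 : (0:ℝ) ≤ s := Real.sqrt_nonneg _
  refine ⟨s + 1 + 2 * |L| * s / ε, ?_⟩
  intro h hM
  have hK : (0:ℝ) < 1 + 2 * |L| * s / ε := by positivity
  refine iSup₂_le fun x hx => ?_
  have hxn : ‖x‖ ≤ s / 2 := aux_norm_le hx
  have key : ∀ y ∈ unitCube n,
      ENNReal.ofReal |Ω (x - y + h) - Ω (x + h)| ≤ ENNReal.ofReal ε := by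
    intro y hy
    have hyn : ‖y‖ ≤ s / 2 := aux_norm_le hy
    -- a = x + h, b = x - y + h
    have hDa : 1 + 2 * |L| * s / ε ≤ ‖x + h‖ := by
      have := norm_sub_norm_le h (x + h)
      have hxh : ‖h - (x + h)‖ = ‖x‖ := by
        rw [show h - (x + h) = -x by abel, norm_neg]
      rw [hxh] at this
      linarith
    have hDb : 1 + 2 * |L| * s / ε ≤ ‖x - y + h‖ := by
      have := norm_sub_norm_le h (x - y + h)
      have hxh : ‖h - (x - y + h)‖ = ‖x - y‖ := by
        rw [show h - (x - y + h) = -(x - y) by abel, norm_neg]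
      rw [hxh] at this
      have hxy : ‖x - y‖ ≤ s := by
        calc ‖x - y‖ ≤ ‖x‖ + ‖y‖ := norm_sub_le _ _
          _ ≤ s := by linarith
      linarith
    have ha : x + h ≠ 0 := by
      intro h0; rw [h0, norm_zero] at hDa; linarith
    have hb : x - y + h ≠ 0 := by
      intro h0; rw [h0, norm_zero] at hDb; linarith
    have ha' : (0:ℝ) < ‖x + h‖ := norm_pos_iff.mpr ha
    have hb' : (0:ℝ) < ‖x - y + h‖ := norm_pos_iff.mpr hb
    have hΩa : Ω (‖x + h‖⁻¹ • (x + h)) = Ω (x + h) :=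
      hhom _ (inv_pos.mpr ha') _ ha
    have hΩb : Ω (‖x - y + h‖⁻¹ • (x - y + h)) = Ω (x - y + h) :=
      hhom _ (inv_pos.mpr hb') _ hb
    have hreal : |Ω (x - y + h) - Ω (x + h)| ≤ ε := by
      have hna : ‖‖x + h‖⁻¹ • (x + h)‖ = 1 := by
        rw [norm_smul, Real.norm_eq_abs, abs_of_pos (inv_pos.mpr ha'), inv_mul_cancel₀ ha'.ne']
      have hnb : ‖‖x - y + h‖⁻¹ • (x - y + h)‖ = 1 := by
        rw [norm_smul, Real.norm_eq_abs, abs_of_pos (inv_pos.mpr hb'), inv_mul_cancel₀ hb'.ne']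
      have h1 := hlip _ _ hna hnb
      rw [hΩa, hΩb] at h1
      have h2 := aux_normalize (x + h) (x - y + h) ha hb
      have hdiff : (x + h) - (x - y + h) = y := by abel
      rw [hdiff] at h2
      have h3 : |Ω (x + h) - Ω (x - y + h)| ≤ |L| * (2 * ‖y‖ / ‖x + h‖) := by
        calc |Ω (x + h) - Ω (x - y + h)|
            ≤ L * ‖‖x + h‖⁻¹ • (x + h) - ‖x - y + h‖⁻¹ • (x - y + h)‖ := h1
          _ ≤ |L| * ‖‖x + h‖⁻¹ • (x + h) - ‖x - y + h‖⁻¹ • (x - y + h)‖ := by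
              gcongr; exact le_abs_self L
          _ ≤ |L| * (2 * ‖y‖ / ‖x + h‖) :=
              mul_le_mul_of_nonneg_left h2 (abs_nonneg L)
      rw [abs_sub_comm]
      refine h3.trans ?_
      rw [show |L| * (2 * ‖y‖ / ‖x + h‖) = |L| * (2 * ‖y‖) / ‖x + h‖ by ring,
        div_le_iff₀ ha']
      have hεK : ε * (1 + 2 * |L| * s / ε) = ε + 2 * |L| * s := by
        field_simp
      calc |L| * (2 * ‖y‖) ≤ |L| * s := by
            have : 2 * ‖y‖ ≤ s := by linarith
            exact mul_le_mul_of_nonneg_left this (abs_nonneg L)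
        _ ≤ ε + 2 * |L| * s := by nlinarith [abs_nonneg L]
        _ = ε * (1 + 2 * |L| * s / ε) := hεK.symm
        _ ≤ ε * ‖x + h‖ := by gcongr
    exact ENNReal.ofReal_le_ofReal hreal
  calc (∫⁻ y in unitCube n, ENNReal.ofReal |Ω (x - y + h) - Ω (x + h)|)
      ≤ ∫⁻ _y in unitCube n, ENNReal.ofReal ε := setLIntegral_mono measurable_const key
    _ = ENNReal.ofReal ε * volume (unitCube n) := setLIntegral_const _ _
    _ = ENNReal.ofReal ε := by rw [aux_volume, mul_one]
end

section
/- Let b be locally integrable on ℝⁿ and let Q be a cube. Define φ(x) = (sgn(b(x) - b_Q) - |Q|^{-1}∫_Q sgn(b(y) - b_Q) dy) χ_Q(x), where b_Q = |Q|^{-1}∫_Q b. Then |φ| ≤ 2χ_Q, (b - b_Q)φ ≥ 0 on ℝⁿ, ∫ φ = 0, and ∫_Q (b(y) - b_Q) φ(y) dy = ∫_Q |b(y) - b_Q| dy. -/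
open MeasureTheory
open scoped ENNReal NNReal

/-- A cube in `ℝⁿ` with sides parallel to the axes, lower corner `a`, side length `r`. -/
def cube (n : ℕ) (a : EuclideanSpace ℝ (Fin n)) (r : ℝ) : Set (EuclideanSpace ℝ (Fin n)) :=
  {x | ∀ i, a i ≤ x i ∧ x i ≤ a i + r}

lemma measurable_realSign : Measurable Real.sign := by
  have : Real.sign = fun r : ℝ => if r < 0 then (-1 : ℝ) else if 0 < r then 1 else 0 := by
    funext r; rfl
  rw [this]
  exact Measurable.ite measurableSet_Iio measurable_const
    (Measurable.ite measurableSet_Ioi measurable_const measurable_const)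

lemma abs_realSign_le (t : ℝ) : |Real.sign t| ≤ 1 := by
  rcases Real.sign_apply_eq t with h | h | h <;> simp [h]

lemma mul_realSign (t : ℝ) : t * Real.sign t = |t| := by
  rcases lt_trichotomy t 0 with h | h | h
  · rw [Real.sign_of_neg h, abs_of_neg h]; ring
  · simp [h]
  · rw [Real.sign_of_pos h, abs_of_pos h]; ring

lemma cube_eq (n : ℕ) (a : EuclideanSpace ℝ (Fin n)) (r : ℝ) :
    cube n a r = (MeasurableEquiv.toLp 2 (Fin n → ℝ)).symm ⁻¹'
      (Set.univ.pi fun i => Set.Icc (a i) (a i + r)) := by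
  ext x
  simp [cube, Set.mem_pi, Set.mem_Icc, MeasurableEquiv.coe_toLp_symm, Pi.le_def, forall_and]

lemma cube_volume {n : ℕ} (a : EuclideanSpace ℝ (Fin n)) (r : ℝ) (hr : 0 ≤ r) :
    volume (cube n a r) = ENNReal.ofReal r ^ n := by
  rw [cube_eq,
    (EuclideanSpace.volume_preserving_symm_measurableEquiv_toLp (Fin n)).measure_preimage
      ((MeasurableSet.univ_pi fun i => measurableSet_Icc).nullMeasurableSet)]
  simp [volume_pi_pi, Real.volume_Icc, Real.volume_Icc_pi, add_sub_cancel_left,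
    Finset.prod_const, Finset.card_univ]

lemma cube_measurableSet {n : ℕ} (a : EuclideanSpace ℝ (Fin n)) (r : ℝ) :
    MeasurableSet (cube n a r) := by
  rw [cube_eq]
  exact (MeasurableEquiv.toLp 2 (Fin n → ℝ)).symm.measurable
    (MeasurableSet.univ_pi fun i => measurableSet_Icc)

lemma cube_isCompact {n : ℕ} (a : EuclideanSpace ℝ (Fin n)) (r : ℝ) :
    IsCompact (cube n a r) := by
  have h : cube n a r = (PiLp.continuousLinearEquiv 2 ℝ (fun _ : Fin n => ℝ)).toHomeomorph ⁻¹'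
      (Set.univ.pi fun i => Set.Icc (a i) (a i + r)) := by
    ext x
    simp [cube, Set.mem_pi, Set.mem_Icc, Pi.le_def, forall_and]
  rw [h]
  exact (ContinuousLinearEquiv.toHomeomorph _).isCompact_preimage.mpr
    (isCompact_univ_pi fun i => isCompact_Icc)

/-- Let `b` be locally integrable and `Q` a cube; with `b_Q = |Q|⁻¹ ∫_Q b` and
`φ(x) = (sgn(b(x) - b_Q) - |Q|⁻¹ ∫_Q sgn(b(y) - b_Q) dy) χ_Q(x)` one has
`|φ| ≤ 2χ_Q`, `(b - b_Q)φ ≥ 0`, `∫ φ = 0`, and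
`∫_Q (b - b_Q)φ = ∫_Q |b - b_Q|`. -/
theorem stmt_14 {n : ℕ} (b : EuclideanSpace ℝ (Fin n) → ℝ)
    (hb : LocallyIntegrable b volume)
    (a : EuclideanSpace ℝ (Fin n)) (r : ℝ) (hr : 0 < r)
    (bQ : ℝ)
    (hbQ : bQ = (volume (cube n a r)).toReal⁻¹ * ∫ y in cube n a r, b y)
    (φ : EuclideanSpace ℝ (Fin n) → ℝ)
    (hφ : φ = fun x =>
      (Real.sign (b x - bQ) -
        (volume (cube n a r)).toReal⁻¹ * ∫ y in cube n a r, Real.sign (b y - bQ)) *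
        Set.indicator (cube n a r) (fun _ => (1 : ℝ)) x) :
    (∀ x, |φ x| ≤ 2 * Set.indicator (cube n a r) (fun _ => (1 : ℝ)) x) ∧
    (∀ x, 0 ≤ (b x - bQ) * φ x) ∧
    (∫ x, φ x) = 0 ∧
    (∫ x in cube n a r, (b x - bQ) * φ x) = ∫ x in cube n a r, |b x - bQ| := by
  set Q := cube n a r with hQdef
  have hQmeas : MeasurableSet Q := cube_measurableSet a r
  have hQvol : volume Q = ENNReal.ofReal r ^ n := cube_volume a r hr.le
  have hvol_lt_top : volume Q < ∞ := by
    rw [hQvol]; exact ENNReal.pow_lt_top ENNReal.ofReal_lt_top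
  have hvol_ne_zero : volume Q ≠ 0 := by
    rw [hQvol]
    exact pow_ne_zero n (by simpa using hr)
  have hvolR : (0 : ℝ) < (volume Q).toReal :=
    ENNReal.toReal_pos hvol_ne_zero hvol_lt_top.ne
  set V : ℝ := (volume Q).toReal with hV
  -- integrability of b on Q
  have hbint : IntegrableOn b Q volume := hb.integrableOn_isCompact (cube_isCompact a r)
  have hbsub : IntegrableOn (fun x => b x - bQ) Q volume := hbint.sub (integrableOn_const
    hvol_lt_top.ne)
  -- sign function integrable on Q
  have hsgn_meas : AEStronglyMeasurable (fun y => Real.sign (b y - bQ)) (volume.restrict Q) :=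
    (measurable_realSign.comp_aemeasurable
      ((hb.aestronglyMeasurable.aemeasurable.sub aemeasurable_const).restrict)).aestronglyMeasurable
  have hsgn_int : IntegrableOn (fun y => Real.sign (b y - bQ)) Q volume := by
    refine Integrable.mono' (integrableOn_const hvol_lt_top.ne :
      IntegrableOn (fun _ => (1:ℝ)) Q volume) hsgn_meas ?_
    filter_upwards with y
    simpa [Real.norm_eq_abs] using abs_realSign_le (b y - bQ)
  set s : ℝ := V⁻¹ * ∫ y in Q, Real.sign (b y - bQ) with hs
  have hs_le : |s| ≤ 1 := by
    have h1 : ‖∫ y in Q, Real.sign (b y - bQ)‖ ≤ 1 * V := by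
      refine norm_setIntegral_le_of_norm_le_const hvol_lt_top (fun y _ => ?_)
      simpa [Real.norm_eq_abs] using abs_realSign_le (b y - bQ)
    rw [hs, abs_mul, abs_inv, abs_of_pos hvolR]
    rw [Real.norm_eq_abs, one_mul] at h1
    calc V⁻¹ * |∫ y in Q, Real.sign (b y - bQ)| ≤ V⁻¹ * V := by
          exact mul_le_mul_of_nonneg_left h1 (inv_nonneg.mpr hvolR.le)
      _ = 1 := inv_mul_cancel₀ hvolR.ne'
  -- φ as indicator
  have hφ_ind : φ = Q.indicator (fun x => Real.sign (b x - bQ) - s) := by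
    funext x
    by_cases hx : x ∈ Q
    · simp [hφ, Set.indicator_of_mem hx, hs, hV]
    · simp [hφ, Set.indicator_of_notMem hx]
  refine ⟨?_, ?_, ?_, ?_⟩
  · intro x
    by_cases hx : x ∈ Q
    · rw [hφ_ind, Set.indicator_of_mem hx, Set.indicator_of_mem hx]
      calc |Real.sign (b x - bQ) - s| ≤ |Real.sign (b x - bQ)| + |s| := abs_sub _ _
        _ ≤ 1 + 1 := add_le_add (abs_realSign_le _) hs_le
        _ = 2 * 1 := by ring
    · rw [hφ_ind, Set.indicator_of_notMem hx, Set.indicator_of_notMem hx]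
      simp
  · intro x
    by_cases hx : x ∈ Q
    · rw [hφ_ind, Set.indicator_of_mem hx]
      have : (b x - bQ) * (Real.sign (b x - bQ) - s)
          = |b x - bQ| - (b x - bQ) * s := by
        rw [mul_sub, mul_realSign]
      rw [this, sub_nonneg]
      calc (b x - bQ) * s ≤ |(b x - bQ) * s| := le_abs_self _
        _ = |b x - bQ| * |s| := abs_mul _ _
        _ ≤ |b x - bQ| * 1 := mul_le_mul_of_nonneg_left hs_le (abs_nonneg _)
        _ = |b x - bQ| := mul_one _
    · rw [hφ_ind, Set.indicator_of_notMem hx, mul_zero]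
  · rw [hφ_ind, integral_indicator hQmeas]
    rw [integral_sub hsgn_int (integrableOn_const hvol_lt_top.ne)]
    rw [setIntegral_const, measureReal_def]
    rw [hs, hV]
    rw [smul_eq_mul]
    field_simp
    rw [div_self (ENNReal.toReal_pos hvol_ne_zero hvol_lt_top.ne).ne', sub_self, mul_zero]
  · have hcong : ∀ x ∈ Q, (b x - bQ) * φ x
        = |b x - bQ| - s * (b x - bQ) := by
      intro x hx
      rw [hφ_ind, Set.indicator_of_mem hx, mul_sub, mul_realSign]
      ring
    rw [setIntegral_congr_fun hQmeas hcong]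
    rw [integral_sub hbsub.abs (hbsub.const_mul s)]
    have hzero : ∫ x in Q, (b x - bQ) = 0 := by
      rw [integral_sub hbint (integrableOn_const hvol_lt_top.ne), setIntegral_const, measureReal_def,
        smul_eq_mul, hbQ]
      field_simp
      rw [← hV, sub_self, mul_zero, mul_zero]
    rw [integral_const_mul, hzero, mul_zero, sub_zero]
end
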